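/- Let Y be a proper metric space, let G be an infinite group acting properly discontinuously and cocompactly by isometries on Y, and let C ≥ 0 be a real number. Then there exists a positive integer n₀ with the following property: for every finite generating set S of G and every x ∈ Y, there is an element g ∈ G whose word length with respect to S is at most n₀ and which satisfies d(g·x, x) > C. -/

import Mathlib

open Pointwise

/-- The group `G` acts on the metric space `Y` by isometries. -/
def IsIsometricAction (G Y : Type*) [Group G] [MulAction G Y] [MetricSpace Y] : Prop :=
  ∀ g : G, Isometry (fun y : Y => g • y)

/-- The action of `G` on `Y` is properly discontinuous: for every compact `K ⊆ Y`,
the set of `g ∈ G` with `g • K ∩ K ≠ ∅` is finite. -/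
def IsProperlyDiscontinuousAction (G Y : Type*) [Group G] [MulAction G Y]
    [TopologicalSpace Y] : Prop :=
  ∀ K : Set Y, IsCompact K → {g : G | (g • K ∩ K).Nonempty}.Finite

/-- The action of `G` on `Y` is cocompact: there is a compact `K ⊆ Y` with
`⋃ g, g • K = Y`. -/
def IsCocompactAction (G Y : Type*) [Group G] [MulAction G Y] [TopologicalSpace Y] : Prop :=
  ∃ K : Set Y, IsCompact K ∧ ⋃ g : G, g • K = Set.univ

section Aux

variable {G : Type*} [Group G]

lemma aux_T_inv (S : Set G) : (S ∪ S⁻¹)⁻¹ = S ∪ S⁻¹ := by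
  simp [Set.union_inv, Set.union_comm]

lemma aux_T_pow_inv_mem (S : Set G) {n : ℕ} {g : G} (hg : g ∈ (S ∪ S⁻¹) ^ n) :
    g⁻¹ ∈ (S ∪ S⁻¹) ^ n := by
  have : g⁻¹ ∈ ((S ∪ S⁻¹) ^ n)⁻¹ := Set.inv_mem_inv.2 hg
  rwa [← inv_pow, aux_T_inv] at this

/-- The set of elements expressible as some power of `S ∪ S⁻¹`, as a subgroup. -/
def auxSubgroup (S : Set G) : Subgroup G where
  carrier := {g | ∃ n : ℕ, g ∈ (S ∪ S⁻¹) ^ n}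
  one_mem' := ⟨0, by simp [Set.mem_one]⟩
  mul_mem' := by
    rintro a b ⟨m, hm⟩ ⟨n, hn⟩
    exact ⟨m + n, by rw [pow_add]; exact Set.mul_mem_mul hm hn⟩
  inv_mem' := by
    rintro a ⟨n, hn⟩
    exact ⟨n, aux_T_pow_inv_mem S hn⟩

lemma aux_univ (S : Set G) (hgen : Subgroup.closure S = ⊤) (g : G) :
    ∃ n : ℕ, g ∈ (S ∪ S⁻¹) ^ n := by
  have hle : Subgroup.closure S ≤ auxSubgroup S := by
    apply Subgroup.closure_le (auxSubgroup S) |>.2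
    intro s hs
    exact ⟨1, by rw [pow_one]; exact Set.mem_union_left _ hs⟩
  have : g ∈ Subgroup.closure S := by rw [hgen]; trivial
  exact hle this

/-- If the ball of radius `n+1` is contained in the ball of radius `n`, then
the ball of radius `n` is everything. -/
lemma aux_saturate (S : Set G) (hgen : Subgroup.closure S = ⊤) (n : ℕ)
    (h : (S ∪ S⁻¹) ^ (n + 1) ⊆ {g : G | ∃ m ≤ n, g ∈ (S ∪ S⁻¹) ^ m}) (g : G) :
    ∃ m ≤ n, g ∈ (S ∪ S⁻¹) ^ m := by
  have key : ∀ N : ℕ, (S ∪ S⁻¹) ^ N ⊆ {g : G | ∃ m ≤ n, g ∈ (S ∪ S⁻¹) ^ m} := by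
    intro N
    induction N with
    | zero => intro a ha; exact ⟨0, Nat.zero_le n, ha⟩
    | succ N ih =>
      intro a ha
      rw [pow_succ] at ha
      obtain ⟨u, hu, t, ht, rfl⟩ := ha
      obtain ⟨j, hj, hu'⟩ := ih hu
      rcases Nat.lt_or_ge j n with hjn | hjn
      · exact ⟨j + 1, hjn, by rw [pow_succ]; exact Set.mul_mem_mul hu' ht⟩
      · have hjeq : j = n := le_antisymm hj hjn
        subst hjeq
        exact h (by rw [pow_succ]; exact Set.mul_mem_mul hu' ht)
  obtain ⟨N, hN⟩ := aux_univ S hgen g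
  exact key N hN

/-- The key counting lemma: in an infinite group the `n`-ball of a generating set
cannot be contained in a finite set of cardinality `≤ n`. -/
lemma aux_not_subset [Infinite G] (S : Set G) (hgen : Subgroup.closure S = ⊤) :
    ∀ (n : ℕ) (F : Finset G), F.card ≤ n →
      ¬ ({g : G | ∃ m ≤ n, g ∈ (S ∪ S⁻¹) ^ m} ⊆ (F : Set G)) := by
  classical
  intro n
  induction n with
  | zero =>
    intro F hF hsub
    have h1 : (1 : G) ∈ {g : G | ∃ m ≤ 0, g ∈ (S ∪ S⁻¹) ^ m} :=
      ⟨0, le_refl 0, by simp [Set.mem_one]⟩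
    have : (1 : G) ∈ (F : Set G) := hsub h1
    rw [Finset.card_eq_zero.1 (Nat.le_zero.1 hF)] at this
    simp at this
  | succ n ih =>
    intro F hF hsub
    have hmono : {g : G | ∃ m ≤ n, g ∈ (S ∪ S⁻¹) ^ m} ⊆
        {g : G | ∃ m ≤ n + 1, g ∈ (S ∪ S⁻¹) ^ m} := by
      rintro a ⟨m, hm, ha⟩; exact ⟨m, hm.trans (Nat.le_succ n), ha⟩
    by_cases hsat : (S ∪ S⁻¹) ^ (n + 1) ⊆ {g : G | ∃ m ≤ n, g ∈ (S ∪ S⁻¹) ^ m}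
    · -- then everything is in the n-ball, so G is finite, contradiction
      have huniv : ∀ g : G, g ∈ {g : G | ∃ m ≤ n, g ∈ (S ∪ S⁻¹) ^ m} :=
        aux_saturate S hgen n hsat
      have : (Set.univ : Set G) ⊆ (F : Set G) := fun g _ => hsub (hmono (huniv g))
      have : (Set.univ : Set G).Finite := Set.Finite.subset (F.finite_toSet) this
      exact Set.infinite_univ this
    · -- pick a new element a in the (n+1)-ball not in the n-ball
      rw [Set.not_subset] at hsat
      obtain ⟨a, haball, hanot⟩ := hsat
      have haF : a ∈ F := hsub ⟨n + 1, le_refl _, haball⟩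
      apply ih (F.erase a) ?_ ?_
      · have := Finset.card_erase_of_mem haF
        omega
      · intro b hb
        have hbF : b ∈ F := hsub (hmono hb)
        have hba : b ≠ a := fun hba => hanot (hba ▸ hb)
        exact Finset.mem_coe.2 (Finset.mem_erase.2 ⟨hba, hbF⟩)

end Aux

/-- If an infinite group `G` acts properly discontinuously and cocompactly by isometries on
a proper metric space `Y` and `C ≥ 0`, then there is a positive integer `n₀` such that for
every finite generating set `S` of `G` and every `x ∈ Y` there is an element `g ∈ G` of word
length at most `n₀` with respect to `S` (i.e. a product of at most `n₀` elements of
`S ∪ S⁻¹`) satisfying `dist (g • x) x > C`. -/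
theorem short_element_moves_far {G Y : Type*} [Group G] [Infinite G] [MetricSpace Y]
    [ProperSpace Y] [MulAction G Y]
    (hiso : IsIsometricAction G Y) (hpd : IsProperlyDiscontinuousAction G Y)
    (hcc : IsCocompactAction G Y) (C : ℝ) (hC : 0 ≤ C) :
    ∃ n₀ : ℕ, 0 < n₀ ∧ ∀ S : Set G, S.Finite → Subgroup.closure S = ⊤ → ∀ x : Y,
      ∃ g : G, (∃ n : ℕ, n ≤ n₀ ∧ g ∈ (S ∪ S⁻¹) ^ n) ∧ C < dist (g • x) x := by
  classical
  by_cases hY : Nonempty Y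
  swap
  · exact ⟨1, one_pos, fun S _ _ x => absurd ⟨x⟩ hY⟩
  obtain ⟨y0⟩ := hY
  obtain ⟨K, hKc, hKu⟩ := hcc
  obtain ⟨r, hKr⟩ := hKc.isBounded.subset_closedBall y0
  set K' : Set Y := Metric.closedBall y0 (r + C) with hK'def
  have hK'c : IsCompact K' := isCompact_closedBall y0 (r + C)
  have hΦ : {g : G | (g • K' ∩ K').Nonempty}.Finite := hpd K' hK'c
  set N := hΦ.toFinset.card with hNdef
  refine ⟨N + 1, Nat.succ_pos N, ?_⟩
  intro S _ hgen x
  -- write x = h • k with k ∈ K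
  have hx : x ∈ ⋃ g : G, g • K := by rw [hKu]; trivial
  rw [Set.mem_iUnion] at hx
  obtain ⟨h, hxh⟩ := hx
  obtain ⟨k, hk, hxk⟩ := hxh
  have hxk' : h • k = x := hxk
  -- the set of elements moving x by at most C
  set Fx : Set G := {g : G | dist (g • x) x ≤ C} with hFxdef
  have hFsub : Fx ⊆ (fun g => h * g * h⁻¹) '' {g : G | (g • K' ∩ K').Nonempty} := by
    intro g hg
    refine ⟨h⁻¹ * g * h, ?_, by group⟩
    have hkK' : k ∈ K' := by
      have := hKr hk
      rw [Metric.mem_closedBall] at this ⊢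
      linarith
    have hcompute : h • ((h⁻¹ * g * h) • k) = g • x := by
      rw [← hxk', smul_smul, smul_smul]
      congr 1
      group
    have hdistk : dist ((h⁻¹ * g * h) • k) k ≤ C := by
      have := (hiso h).dist_eq ((h⁻¹ * g * h) • k) k
      rw [hcompute, hxk'] at this
      rw [← this]
      exact hg
    refine ⟨(h⁻¹ * g * h) • k, Set.smul_mem_smul_set hkK', ?_⟩
    rw [Metric.mem_closedBall]
    calc dist ((h⁻¹ * g * h) • k) y0 ≤ dist ((h⁻¹ * g * h) • k) k + dist k y0 :=
          dist_triangle _ _ _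
      _ ≤ C + r := add_le_add hdistk (Metric.mem_closedBall.1 (hKr hk))
      _ = r + C := by ring
  have hFfin : Fx.Finite := (hΦ.image _).subset hFsub
  have hFcard : hFfin.toFinset.card ≤ N := by
    have hsub2 : hFfin.toFinset ⊆ Finset.image (fun g => h * g * h⁻¹) hΦ.toFinset := by
      intro g hg
      rw [Set.Finite.mem_toFinset] at hg
      obtain ⟨g', hg', rfl⟩ := hFsub hg
      exact Finset.mem_image.2 ⟨g', hΦ.mem_toFinset.2 hg', rfl⟩
    calc hFfin.toFinset.card ≤ (Finset.image (fun g => h * g * h⁻¹) hΦ.toFinset).card :=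
          Finset.card_le_card hsub2
      _ ≤ hΦ.toFinset.card := Finset.card_image_le
  have hnot := aux_not_subset S hgen (N + 1) hFfin.toFinset (hFcard.trans (Nat.le_succ N))
  rw [Set.not_subset] at hnot
  obtain ⟨g, hgball, hgF⟩ := hnot
  refine ⟨g, hgball, ?_⟩
  rw [Finset.mem_coe, Set.Finite.mem_toFinset] at hgF
  exact lt_of_not_ge hgF
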